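/- Let k be a field and 𝒜 a finite-dimensional category. Then every simple object L of Mod-𝒜 is finitely generated (indeed a quotient of a representable module) and locally finite-dimensional, and for every fixed object x of 𝒜 there are only finitely many isomorphism classes of simple objects L of Mod-𝒜 with L(x) ≠ 0. -/

import Mathlib

open CategoryTheory CategoryTheory.Limits Opposite

section
variable (k : Type) [Field k]

/-- `k`-linearity on the opposite category. -/
instance oppositeLinear (C : Type*) [Category C] [Preadditive C] [CategoryTheory.Linear k C] :
    CategoryTheory.Linear k Cᵒᵖ where
  homModule X Y := Equiv.module k (opEquiv X Y)
  smul_comp _ _ _ _ _ _ :=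
    Quiver.Hom.unop_inj (CategoryTheory.Linear.comp_smul _ _ _ _ _ _)
  comp_smul _ _ _ _ _ _ :=
    Quiver.Hom.unop_inj (CategoryTheory.Linear.smul_comp _ _ _ _ _ _)

@[simp] lemma unop_ksmul {C : Type*} [Category C] [Preadditive C]
    [CategoryTheory.Linear k C] {X Y : Cᵒᵖ} (r : k) (f : X ⟶ Y) :
    (r • f).unop = r • f.unop := rfl

/-- The property of a functor between `k`-linear categories being `k`-linear
(in particular additive). -/
def IsKLinear {C D : Type*} [Category C] [Category D] [Preadditive C] [Preadditive D]
    [CategoryTheory.Linear k C] [CategoryTheory.Linear k D] (F : C ⥤ D) : Prop :=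
  ∃ h : F.Additive, Functor.Linear k F

/-- The category `Mod-A` of right modules over a small `k`-linear category `A`:
`k`-linear functors `Aᵒᵖ ⥤ ModuleCat k`. -/
abbrev RMod (A : Type) [SmallCategory A] [Preadditive A] [CategoryTheory.Linear k A] :=
  ObjectProperty.FullSubcategory (fun F : Aᵒᵖ ⥤ ModuleCat.{0} k => IsKLinear k F)

/-- The category `A-Mod` of left modules over a small `k`-linear category `A`:
`k`-linear functors `A ⥤ ModuleCat k`. -/
abbrev LMod (A : Type) [SmallCategory A] [Preadditive A] [CategoryTheory.Linear k A] :=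
  ObjectProperty.FullSubcategory (fun F : A ⥤ ModuleCat.{0} k => IsKLinear k F)

variable {k}

instance linYonObjLinear {C : Type*} [Category C] [Preadditive C] [CategoryTheory.Linear k C]
    (x : C) : ((linearYoneda k C).obj x).Linear k where
  map_smul f r := by
    ext (g : _ ⟶ x)
    exact CategoryTheory.Linear.smul_comp _ _ _ _ _ _

instance linCoyonObjLinear {C : Type*} [Category C] [Preadditive C] [CategoryTheory.Linear k C]
    (x : Cᵒᵖ) : ((linearCoyoneda k C).obj x).Linear k where
  map_smul f r := by
    ext (g : x.unop ⟶ _)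
    exact CategoryTheory.Linear.comp_smul _ _ _ _ _ _

variable (k)
variable (A : Type) [SmallCategory A] [Preadditive A] [CategoryTheory.Linear k A]

/-- The representable right `A`-module `Hom_A(−, x)`. -/
def reprR (x : A) : RMod k A :=
  ⟨(linearYoneda k A).obj x, inferInstance, inferInstance⟩

/-- The representable left `A`-module `Hom_A(x, −)`. -/
def reprL (x : A) : LMod k A :=
  ⟨(linearCoyoneda k A).obj (op x), inferInstance, inferInstance⟩

/-- The underlying functor of a finite direct sum of representable right modules. -/
def sumReprRFunctor {n : ℕ} (x : Fin n → A) : Aᵒᵖ ⥤ ModuleCat.{0} k where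
  obj y := ModuleCat.of k (∀ i, y.unop ⟶ x i)
  map {y z} f := ModuleCat.ofHom
    (LinearMap.pi fun i =>
      (CategoryTheory.Linear.leftComp k (x i) f.unop).comp (LinearMap.proj i))
  map_id y := by
    apply ModuleCat.hom_ext; apply LinearMap.ext; intro g
    funext i
    simp
  map_comp f g := by
    apply ModuleCat.hom_ext; apply LinearMap.ext; intro h
    funext i
    simp

instance sumReprRFunctor_additive {n : ℕ} (x : Fin n → A) :
    (sumReprRFunctor k A x).Additive where
  map_add {y z f g} := by
    ext h
    funext i
    dsimp only [sumReprRFunctor]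
    erw [ModuleCat.hom_add]
    exact Preadditive.add_comp _ _ _ _ _ _

instance sumReprRFunctor_linear {n : ℕ} (x : Fin n → A) :
    (sumReprRFunctor k A x).Linear k where
  map_smul {y z} f r := by
    ext h
    funext i
    dsimp only [sumReprRFunctor]
    exact CategoryTheory.Linear.smul_comp _ _ _ _ _ _

/-- The finite direct sum of the representable right modules `Hom_A(−, x i)`. -/
def sumReprR {n : ℕ} (x : Fin n → A) : RMod k A :=
  ⟨sumReprRFunctor k A x, inferInstance, inferInstance⟩

/-- A right module is finitely generated if it admits an epimorphism from a finite
direct sum of representable modules. -/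
def RMod.IsFG (V : RMod k A) : Prop :=
  ∃ (n : ℕ) (x : Fin n → A) (p : sumReprR k A x ⟶ V), Epi p

/-- A right module is locally finite-dimensional if each of its values is a
finite-dimensional vector space. -/
def RMod.IsLFD (V : RMod k A) : Prop :=
  ∀ x : A, FiniteDimensional k (V.obj.obj (op x))


variable {k A}

/-- The morphism `Hom(-,x) ⟶ L` determined by `v ∈ L(x)`. -/
def pGen (L : RMod k A) (x : A) (v : L.obj.obj (op x)) :
    (reprR k A x).obj ⟶ L.obj where
  app y := ModuleCat.ofHom
    { toFun := fun g : y.unop ⟶ x => L.obj.map g.op v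
      map_add' := fun g g' => by
        obtain ⟨ha, hl⟩ := L.property
        show L.obj.map (g + g').op v = L.obj.map g.op v + L.obj.map g'.op v
        rw [op_add, ha.map_add]
        rfl
      map_smul' := fun r g => by
        obtain ⟨ha, hl⟩ := L.property
        show L.obj.map (r • g).op v = r • L.obj.map g.op v
        have h1 : (r • g).op = r • g.op := rfl
        rw [h1, hl.map_smul]
        rfl }
  naturality y z f := by
    obtain ⟨ha, hl⟩ := L.property
    ext (g : y.unop ⟶ x)
    show L.obj.map (f.unop ≫ g).op v = L.obj.map f (L.obj.map g.op v)
    rw [op_comp, Quiver.Hom.op_unop, L.obj.map_comp]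
    rfl

lemma pGen_app (L : RMod k A) (x : A) (v : L.obj.obj (op x)) (y : Aᵒᵖ)
    (g : y.unop ⟶ x) : (pGen L x v).app y g = L.obj.map g.op v := rfl

lemma pGen_id (L : RMod k A) (x : A) (v : L.obj.obj (op x)) :
    (pGen L x v).app (op x) (𝟙 x) = v := by
  rw [pGen_app]
  change (L.obj.map (𝟙 (op x))) v = v
  rw [L.obj.map_id]
  rfl

/-- Pointwise surjective morphisms in `RMod` are epimorphisms. -/
lemma epi_of_surj {V W : RMod k A} (f : V ⟶ W)
    (hf : ∀ y, Function.Surjective (f.hom.app y)) : Epi f := by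
  constructor
  intro Z g h hyp
  apply ObjectProperty.hom_ext
  apply NatTrans.ext
  funext y
  apply ModuleCat.hom_ext
  apply LinearMap.ext
  intro w
  obtain ⟨u, rfl⟩ := hf y w
  exact congrFun (congrArg (fun t : V ⟶ Z => (t.hom.app y : _ → _)) hyp) u

/-- A subfunctor of a simple module containing a nonzero element is everything. -/
lemma subfunctor_top (L : RMod k A) [Simple L]
    (S : ∀ y : Aᵒᵖ, Submodule k (L.obj.obj y))
    (hS : ∀ {y z : Aᵒᵖ} (f : y ⟶ z), ∀ v ∈ S y, L.obj.map f v ∈ S z)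
    (y₀ : Aᵒᵖ) (v : L.obj.obj y₀) (hv : v ∈ S y₀) (hv0 : v ≠ 0) (y : Aᵒᵖ) :
    S y = ⊤ := by
  obtain ⟨ha, hl⟩ := L.property
  -- the subfunctor as an object of RMod
  let Wf : Aᵒᵖ ⥤ ModuleCat.{0} k :=
    { obj := fun y => ModuleCat.of k (S y)
      map := fun {y z} f => ModuleCat.ofHom
        ((L.obj.map f).hom.restrict (fun w hw => hS f w hw))
      map_id := fun y => by
        ext ⟨w, hw⟩
        show L.obj.map (𝟙 y) w = w
        rw [L.obj.map_id]; rfl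
      map_comp := fun {y z u} f g => by
        ext ⟨w, hw⟩
        show L.obj.map (f ≫ g) w = L.obj.map g (L.obj.map f w)
        rw [L.obj.map_comp]; rfl }
  haveI hWa : Wf.Additive := by
    constructor
    intro y z f g
    ext ⟨w, hw⟩
    show L.obj.map (f + g) w = L.obj.map f w + L.obj.map g w
    rw [ha.map_add]; rfl
  haveI hWl : Wf.Linear k := by
    constructor
    intro y z f r
    ext ⟨w, hw⟩
    show L.obj.map (r • f) w = r • L.obj.map f w
    rw [hl.map_smul]; rfl
  let W : RMod k A := ⟨Wf, hWa, hWl⟩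
  let ι : W ⟶ L :=
    { hom :=
      { app := fun y => ModuleCat.ofHom (S y).subtype
        naturality := fun y z f => by
          ext ⟨w, hw⟩
          rfl } }
  haveI : Mono ι := by
    constructor
    intro Z g h hyp
    apply ObjectProperty.hom_ext
    apply NatTrans.ext
    funext z
    apply ModuleCat.hom_ext
    apply LinearMap.ext
    intro w
    apply Subtype.ext
    exact congrFun (congrArg (fun t : Z ⟶ L => (t.hom.app z : _ → _)) hyp) w
  have hne : ι ≠ 0 := by
    intro h0
    apply hv0
    have := congrFun (congrArg (fun t : W ⟶ L => (t.hom.app y₀ : _ → _)) h0) ⟨v, hv⟩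
    exact this
  haveI : IsIso ι := (Simple.mono_isIso_iff_nonzero ι).mpr hne
  rw [eq_top_iff]
  intro w _
  have h1 : (inv ι ≫ ι : L ⟶ L) = 𝟙 L := IsIso.inv_hom_id ι
  have h2 := congrFun (congrArg (fun t : L ⟶ L => (t.hom.app y : _ → _)) h1) w
  have h3 : ((S y).subtype) ((inv ι).hom.app y w) = w := h2
  rw [← h3]
  exact ((inv ι).hom.app y w).2

lemma exists_nonzero (L : RMod k A) [Simple L] :
    ∃ (x : A) (v : L.obj.obj (op x)), v ≠ 0 := by
  by_contra hcon
  push_neg at hcon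
  apply id_nonzero L
  apply ObjectProperty.hom_ext
  apply NatTrans.ext
  funext y
  apply ModuleCat.hom_ext
  apply LinearMap.ext
  intro w
  have := hcon y.unop w
  simpa using this

lemma pGen_range_subfunctor (L : RMod k A) (x : A) (v : L.obj.obj (op x))
    {y z : Aᵒᵖ} (f : y ⟶ z) (w : L.obj.obj y)
    (hw : w ∈ LinearMap.range ((pGen L x v).app y).hom) :
    L.obj.map f w ∈ LinearMap.range ((pGen L x v).app z).hom := by
  obtain ⟨(g : y.unop ⟶ x), rfl⟩ := hw
  refine ⟨f.unop ≫ g, ?_⟩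
  show L.obj.map (f.unop ≫ g).op v = L.obj.map f ((pGen L x v).app y g)
  rw [pGen_app, op_comp, Quiver.Hom.op_unop, L.obj.map_comp]
  rfl

lemma pGen_surjective (L : RMod k A) [Simple L] (x : A) (v : L.obj.obj (op x))
    (hv : v ≠ 0) (y : Aᵒᵖ) : Function.Surjective ((pGen L x v).app y) := by
  have htop := subfunctor_top L (fun y => LinearMap.range ((pGen L x v).app y).hom)
    (fun f w hw => pGen_range_subfunctor L x v f w hw) (op x) v
    ⟨𝟙 x, pGen_id L x v⟩ hv y
  intro w
  have : w ∈ LinearMap.range ((pGen L x v).app y).hom := htop ▸ Submodule.mem_top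
  exact this

lemma part1 (hfd : ∀ x y : A, FiniteDimensional k (x ⟶ y)) (L : RMod k A) [Simple L] :
    (∃ (x : A) (p : reprR k A x ⟶ L), Epi p) ∧ RMod.IsFG k A L ∧ RMod.IsLFD k A L := by
  obtain ⟨x, v, hv⟩ := exists_nonzero L
  have hsurj := pGen_surjective L x v hv
  refine ⟨⟨x, ObjectProperty.homMk (pGen L x v), epi_of_surj _ hsurj⟩, ?_, ?_⟩
  · refine ⟨1, fun _ => x, ?_⟩
    have hnat : ∀ {y z : Aᵒᵖ} (f : y ⟶ z),
        ((sumReprR k A (fun _ : Fin 1 => x)).obj.map f ≫ ModuleCat.ofHom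
          (((pGen L x v).app z).hom.comp (LinearMap.proj 0))) =
        (ModuleCat.ofHom (((pGen L x v).app y).hom.comp (LinearMap.proj 0)) ≫
          L.obj.map f) := by
      intro y z f
      ext g
      show (pGen L x v).app z (f.unop ≫ g 0) = L.obj.map f ((pGen L x v).app y (g 0))
      rw [pGen_app, pGen_app, op_comp, Quiver.Hom.op_unop, L.obj.map_comp]; rfl
    refine ⟨⟨fun y => ModuleCat.ofHom
      (((pGen L x v).app y).hom.comp (LinearMap.proj 0)), fun {y z} f => hnat f⟩, ?_⟩
    apply epi_of_surj
    intro y w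
    obtain ⟨g, hg⟩ := hsurj y w
    exact ⟨fun _ => g, hg⟩
  · intro y
    haveI : Module.Finite k ((reprR k A x).obj.obj (op y)) := hfd y x
    exact Module.Finite.of_surjective ((pGen L x v).app (op y)).hom (hsurj (op y))

/-- The `End (op x)`-module structure on `L(x)`. -/
instance modE (L : RMod k A) (x : A) :
    Module (CategoryTheory.End (op x : Aᵒᵖ)) (L.obj.obj (op x)) where
  smul e v := L.obj.map e v
  one_smul v := by
    show L.obj.map (𝟙 (op x)) v = v
    rw [L.obj.map_id]; rfl
  mul_smul e e' v := by
    show L.obj.map (e' ≫ e) v = L.obj.map e (L.obj.map e' v)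
    rw [L.obj.map_comp]; rfl
  smul_zero e := map_zero (L.obj.map e).hom
  smul_add e v w := map_add (L.obj.map e).hom v w
  add_smul e e' v := by
    obtain ⟨ha, hl⟩ := L.property
    show L.obj.map (e + e') v = L.obj.map e v + L.obj.map e' v
    rw [ha.map_add]; rfl
  zero_smul v := by
    obtain ⟨ha, hl⟩ := L.property
    show L.obj.map (0 : op x ⟶ op x) v = 0
    haveI := ha
    rw [L.obj.map_zero]; rfl

lemma smulE_def (L : RMod k A) (x : A) (e : CategoryTheory.End (op x : Aᵒᵖ))
    (v : L.obj.obj (op x)) : e • v = L.obj.map e v := rfl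

/-- Evaluation of the action at a fixed vector, as an `E`-linear map. -/
def evalMap (L : RMod k A) (x : A) (v : L.obj.obj (op x)) :
    CategoryTheory.End (op x : Aᵒᵖ) →ₗ[CategoryTheory.End (op x : Aᵒᵖ)] L.obj.obj (op x) where
  toFun e := e • v
  map_add' e e' := add_smul e e' v
  map_smul' e e' := mul_smul e e' v

lemma isSimpleModuleE (L : RMod k A) [Simple L] (x : A)
    [Nontrivial (L.obj.obj (op x))] :
    IsSimpleModule (CategoryTheory.End (op x : Aᵒᵖ)) (L.obj.obj (op x)) := by
  refine { eq_bot_or_eq_top := ?_ }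
  intro N
  rcases eq_or_ne N ⊥ with h | h
  · exact Or.inl h
  · right
    obtain ⟨v, hv, hv0⟩ := Submodule.exists_mem_ne_zero_of_ne_bot h
    have htop := subfunctor_top L (fun y => LinearMap.range ((pGen L x v).app y).hom)
      (fun f w hw => pGen_range_subfunctor L x v f w hw) (op x) v
      ⟨𝟙 x, pGen_id L x v⟩ hv0 (op x)
    rw [eq_top_iff]
    intro w _
    have : w ∈ LinearMap.range ((pGen L x v).app (op x)).hom := htop ▸ Submodule.mem_top
    obtain ⟨(g : x ⟶ x), rfl⟩ := this
    show L.obj.map g.op v ∈ N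
    exact N.smul_mem (g.op : CategoryTheory.End (op x : Aᵒᵖ)) hv

lemma pGen_eq_zero_iff (L : RMod k A) [Simple L] (x : A)
    [Nontrivial (L.obj.obj (op x))] (v : L.obj.obj (op x))
    (y : Aᵒᵖ) (g : y.unop ⟶ x) :
    (pGen L x v).app y g = 0 ↔
      ∀ h : x ⟶ y.unop, L.obj.map (h ≫ g).op v = 0 := by
  constructor
  · intro h0 h
    rw [op_comp, L.obj.map_comp]
    have h0' : (L.obj.map g.op) v = 0 := h0
    show L.obj.map h.op ((L.obj.map g.op) v) = 0
    rw [h0']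
    exact map_zero _
  · intro hall
    by_contra hne
    set w : L.obj.obj y := (pGen L x v).app y g with hw
    have hw0 : w ≠ 0 := hne
    have htop := subfunctor_top L (fun z => LinearMap.range ((pGen L y.unop w).app z).hom)
      (fun f u hu => pGen_range_subfunctor L y.unop w f u hu) (op y.unop) w
      ⟨𝟙 y.unop, pGen_id L y.unop w⟩ hw0 (op x)
    obtain ⟨u, hu0⟩ := exists_ne (0 : L.obj.obj (op x))
    have : u ∈ LinearMap.range ((pGen L y.unop w).app (op x)).hom := htop ▸ Submodule.mem_top
    obtain ⟨(h : x ⟶ y.unop), hh⟩ := this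
    apply hu0
    rw [← hh]
    have hz := hall h
    rw [op_comp, L.obj.map_comp] at hz
    show L.obj.map h.op w = 0
    rw [hw, pGen_app]
    exact hz

lemma pGen_nat (L : RMod k A) (x : A) (v : L.obj.obj (op x)) {y z : Aᵒᵖ}
    (f : y ⟶ z) (g : y.unop ⟶ x) :
    (pGen L x v).app z (f.unop ≫ g) = L.obj.map f ((pGen L x v).app y g) := by
  show L.obj.map (f.unop ≫ g).op v = L.obj.map f ((pGen L x v).app y g)
  rw [pGen_app, op_comp, Quiver.Hom.op_unop, L.obj.map_comp]
  rfl

lemma quotKer_mk {R M N : Type} [Ring R] [AddCommGroup M] [Module R M]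
    [AddCommGroup N] [Module R N] (f : M →ₗ[R] N) (hf : Function.Surjective f) (m : M) :
    LinearMap.quotKerEquivOfSurjective f hf (Submodule.Quotient.mk m) = f m := by
  simp [LinearMap.quotKerEquivOfSurjective]

lemma iso_of_equiv (x : A) (L L' : RMod k A) [Simple L] [Simple L']
    [Nontrivial (L.obj.obj (op x))]
    (φ : L.obj.obj (op x) ≃ₗ[CategoryTheory.End (op x : Aᵒᵖ)] L'.obj.obj (op x)) :
    Nonempty (L ≅ L') := by
  obtain ⟨v, hv⟩ := exists_ne (0 : L.obj.obj (op x))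
  have hv' : φ v ≠ 0 := fun h => hv (by simpa using (map_eq_zero_iff φ φ.injective).mp h)
  haveI : Nontrivial (L'.obj.obj (op x)) := ⟨⟨φ v, 0, hv'⟩⟩
  have key : ∀ e : CategoryTheory.End (op x : Aᵒᵖ),
      φ (L.obj.map e v) = L'.obj.map e (φ v) := fun e => φ.map_smul e v
  have hs := pGen_surjective L x v hv
  have hs' := pGen_surjective L' x (φ v) hv'
  have hker : ∀ (y : Aᵒᵖ) (g : y.unop ⟶ x),
      (pGen L x v).app y g = 0 ↔ (pGen L' x (φ v)).app y g = 0 := by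
    intro y g
    rw [pGen_eq_zero_iff, pGen_eq_zero_iff]
    constructor
    · intro hall h
      rw [← key, hall h, map_zero]
    · intro hall h
      have := hall h
      rw [← key] at this
      exact (map_eq_zero_iff φ φ.injective).mp this
  have hkereq : ∀ y : Aᵒᵖ, LinearMap.ker ((pGen L x v).app y).hom
      = LinearMap.ker ((pGen L' x (φ v)).app y).hom := by
    intro y
    ext g
    rw [LinearMap.mem_ker, LinearMap.mem_ker]
    exact hker y g
  let e : ∀ y : Aᵒᵖ, (_ ⧸ LinearMap.ker ((pGen L x v).app y).hom) ≃ₗ[k] L.obj.obj y :=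
    fun y => LinearMap.quotKerEquivOfSurjective _ (hs y)
  let e' : ∀ y : Aᵒᵖ, (_ ⧸ LinearMap.ker ((pGen L' x (φ v)).app y).hom) ≃ₗ[k] L'.obj.obj y :=
    fun y => LinearMap.quotKerEquivOfSurjective _ (hs' y)
  let θ : ∀ y : Aᵒᵖ, L.obj.obj y ≃ₗ[k] L'.obj.obj y := fun y =>
    ((e y).symm.trans (Submodule.quotEquivOfEq _ _ (hkereq y))).trans (e' y)
  have hθ : ∀ (y : Aᵒᵖ) (g : y.unop ⟶ x), θ y ((pGen L x v).app y g) = (pGen L' x (φ v)).app y g := by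
    intro y (g : (reprR k A x).obj.obj y)
    show (e' y) (Submodule.quotEquivOfEq _ _ (hkereq y) ((e y).symm ((pGen L x v).app y g))) = _
    rw [← quotKer_mk ((pGen L x v).app y).hom (hs y) g, LinearEquiv.symm_apply_apply,
      Submodule.quotEquivOfEq_mk]
    exact quotKer_mk ((pGen L' x (φ v)).app y).hom (hs' y) g
  have hnat : ∀ {y z : Aᵒᵖ} (f : y ⟶ z),
      L.obj.map f ≫ ModuleCat.ofHom (θ z).toLinearMap
        = ModuleCat.ofHom (θ y).toLinearMap ≫ L'.obj.map f := by
    intro y z f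
    apply ModuleCat.hom_ext
    apply LinearMap.ext
    intro w
    obtain ⟨(g : y.unop ⟶ x), rfl⟩ := hs y w
    show θ z (L.obj.map f ((pGen L x v).app y g)) = L'.obj.map f (θ y ((pGen L x v).app y g))
    rw [← pGen_nat, hθ, hθ, pGen_nat]
  let iso : L.obj ≅ L'.obj := NatIso.ofComponents (fun y => (θ y).toModuleIso)
    (fun f => hnat f)
  exact ⟨ObjectProperty.isoMk _ iso⟩

/-- A finite-length module has only finitely many simple "quotient targets" up to iso. -/
lemma fin_simples (R : Type) [Ring R] (M : Type) [AddCommGroup M] [Module R M]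
    (hM : IsFiniteLength R M) :
    ∃ (n : ℕ) (Ms : Fin n → ModuleCat.{0} R),
      ∀ (N : Type) [AddCommGroup N] [Module R N], IsSimpleModule R N →
        ∀ f : M →ₗ[R] N, f ≠ 0 → ∃ i, Nonempty (N ≃ₗ[R] Ms i) := by
  induction hM with
  | of_subsingleton =>
    refine ⟨0, Fin.elim0, ?_⟩
    intro N _ _ _ f hf
    exact absurd (LinearMap.ext fun m => by rw [Subsingleton.elim m 0, map_zero]; rfl) hf
  | @of_simple_quotient M _ _ N₀ _ _ ih =>
    obtain ⟨n, Ms, hMs⟩ := ih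
    refine ⟨n + 1, Fin.cons (ModuleCat.of R (M ⧸ N₀)) Ms, ?_⟩
    intro N iN₁ iN₂ hN f hf
    by_cases h0 : f.comp N₀.subtype = 0
    · have hle : N₀ ≤ LinearMap.ker f := by
        intro m hm
        have := LinearMap.congr_fun h0 ⟨m, hm⟩
        simpa using this
      let g : (M ⧸ N₀) →ₗ[R] N := N₀.liftQ f hle
      have hg : f = g.comp N₀.mkQ := (Submodule.liftQ_mkQ N₀ f hle).symm
      have hgne : g ≠ 0 := by
        intro hz
        apply hf
        rw [hg, hz]
        exact LinearMap.zero_comp _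
      have hinj : Function.Injective g := by
        rw [← LinearMap.ker_eq_bot]
        rcases (‹IsSimpleModule R (M ⧸ N₀)›.eq_bot_or_eq_top (LinearMap.ker g)) with h | h
        · exact h
        · exact absurd (LinearMap.ker_eq_top.mp h) hgne
      have hsurj : Function.Surjective g := by
        rw [← LinearMap.range_eq_top]
        rcases (hN.eq_bot_or_eq_top (LinearMap.range g)) with h | h
        · exact absurd (LinearMap.range_eq_bot.mp h) hgne
        · exact h
      refine ⟨0, ⟨?_⟩⟩
      rw [Fin.cons_zero]
      exact (LinearEquiv.ofBijective g ⟨hinj, hsurj⟩).symm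
    · obtain ⟨i, ⟨eqv⟩⟩ := hMs N hN (f.comp N₀.subtype) h0
      refine ⟨i.succ, ⟨?_⟩⟩
      rw [Fin.cons_succ]
      exact eqv

/-- `unop` as a `k`-linear equivalence. -/
def unopLinearEquiv (X Y : Aᵒᵖ) : (X ⟶ Y) ≃ₗ[k] (Y.unop ⟶ X.unop) where
  toFun f := f.unop
  invFun g := g.op
  left_inv f := rfl
  right_inv g := rfl
  map_add' f g := rfl
  map_smul' r f := rfl

instance endModuleK (x : A) : Module k (CategoryTheory.End (op x : Aᵒᵖ)) :=
  inferInstanceAs (Module k (op x ⟶ op x))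

instance endTower (x : A) : IsScalarTower k (CategoryTheory.End (op x : Aᵒᵖ))
    (CategoryTheory.End (op x : Aᵒᵖ)) := by
  constructor
  intro a e f
  show (f ≫ (a • e) : op x ⟶ op x) = a • (f ≫ e)
  exact CategoryTheory.Linear.comp_smul _ _ _ _ _ _

/-- `unop` as a `k`-linear equivalence on endomorphisms. -/
def endUnopLE (x : A) : CategoryTheory.End (op x : Aᵒᵖ) ≃ₗ[k] (x ⟶ x) where
  toFun f := f.unop
  invFun g := g.op
  left_inv f := rfl
  right_inv g := rfl
  map_add' _ _ := rfl
  map_smul' _ _ := rfl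

lemma isFiniteLengthE (hfd : ∀ x y : A, FiniteDimensional k (x ⟶ y)) (x : A) :
    IsFiniteLength (CategoryTheory.End (op x : Aᵒᵖ)) (CategoryTheory.End (op x : Aᵒᵖ)) := by
  haveI hfin : Module.Finite k (CategoryTheory.End (op x : Aᵒᵖ)) := by
    haveI := hfd x x
    exact Module.Finite.equiv (endUnopLE x).symm
  haveI h1 : IsNoetherian k (CategoryTheory.End (op x : Aᵒᵖ)) := IsNoetherian.iff_fg.mpr hfin
  haveI h2 : IsArtinian k (CategoryTheory.End (op x : Aᵒᵖ)) := inferInstance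
  exact isFiniteLength_iff_isNoetherian_isArtinian.mpr
    ⟨isNoetherian_of_tower k h1, isArtinian_of_tower k h2⟩

theorem statement_13'
    (hfd : ∀ x y : A, FiniteDimensional k (x ⟶ y)) :
    (∀ L : RMod k A, Simple L →
      (∃ (x : A) (p : reprR k A x ⟶ L), Epi p) ∧
      RMod.IsFG k A L ∧ RMod.IsLFD k A L) ∧
    (∀ x : A, ∃ (n : ℕ) (Ls : Fin n → RMod k A),
      (∀ i, Simple (Ls i)) ∧
      ∀ L : RMod k A, Simple L → Nontrivial (L.obj.obj (op x)) →
        ∃ i, Nonempty (L ≅ Ls i)) := by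
  constructor
  · intro L hL
    haveI := hL
    exact part1 hfd L
  · intro x
    classical
    obtain ⟨n, Ms, hMs⟩ := fin_simples (CategoryTheory.End (op x : Aᵒᵖ))
      (CategoryTheory.End (op x : Aᵒᵖ)) (isFiniteLengthE hfd x)
    let pred : Fin n → Prop := fun i =>
      ∃ L : RMod k A, ∃ _ : Simple L,
        Nonempty ((L.obj.obj (op x)) ≃ₗ[CategoryTheory.End (op x : Aᵒᵖ)] Ms i)
    let T := {i : Fin n // pred i}
    let f : T → RMod k A := fun s => s.2.choose
    have hfSimple : ∀ s : T, Simple (f s) := fun s => s.2.choose_spec.choose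
    have hfEquiv : ∀ s : T, Nonempty (((f s).obj.obj (op x))
        ≃ₗ[CategoryTheory.End (op x : Aᵒᵖ)] Ms s.1) := fun s => s.2.choose_spec.choose_spec
    refine ⟨Fintype.card T, fun j => f ((Fintype.equivFin T).symm j), fun j => hfSimple _, ?_⟩
    intro L hL hnt
    haveI := hL
    haveI := hnt
    haveI := isSimpleModuleE L x
    obtain ⟨v, hv⟩ := exists_ne (0 : L.obj.obj (op x))
    have hf0 : evalMap L x v ≠ 0 := by
      intro h
      apply hv
      have h1 := LinearMap.congr_fun h (1 : CategoryTheory.End (op x : Aᵒᵖ))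
      have h2 : (1 : CategoryTheory.End (op x : Aᵒᵖ)) • v = 0 := h1
      rwa [one_smul] at h2
    obtain ⟨i, ⟨ψ⟩⟩ := hMs (L.obj.obj (op x)) (isSimpleModuleE L x) (evalMap L x v) hf0
    have hi : pred i := ⟨L, hL, ⟨ψ⟩⟩
    have hcov : ∃ s : T, Nonempty (L ≅ f s) := by
      refine ⟨⟨i, hi⟩, ?_⟩
      obtain ⟨ψ''⟩ := hfEquiv ⟨i, hi⟩
      haveI := hfSimple ⟨i, hi⟩
      exact iso_of_equiv x L (f ⟨i, hi⟩) (ψ.trans ψ''.symm)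
    obtain ⟨s, hs⟩ := hcov
    refine ⟨Fintype.equivFin T s, ?_⟩
    show Nonempty (L ≅ f ((Fintype.equivFin T).symm ((Fintype.equivFin T) s)))
    rw [Equiv.symm_apply_apply]
    exact hs

variable (k A)

/-!
STATEMENT 13: over a finite-dimensional category `A`, every simple object `L` of
`Mod-A` is a quotient of a representable module (in particular finitely generated)
and is locally finite-dimensional; and for each fixed object `x` of `A` there are
only finitely many isomorphism classes of simple objects `L` with `L(x) ≠ 0`.
-/
theorem statement_13
    (hfd : ∀ x y : A, FiniteDimensional k (x ⟶ y)) :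
    (∀ L : RMod k A, Simple L →
      (∃ (x : A) (p : reprR k A x ⟶ L), Epi p) ∧
      RMod.IsFG k A L ∧ RMod.IsLFD k A L) ∧
    (∀ x : A, ∃ (n : ℕ) (Ls : Fin n → RMod k A),
      (∀ i, Simple (Ls i)) ∧
      ∀ L : RMod k A, Simple L → Nontrivial (L.obj.obj (op x)) →
        ∃ i, Nonempty (L ≅ Ls i)) := by
  exact statement_13' hfd

end
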